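/- Let K be a measurable space and let μ_n, λ_n (n ∈ ℕ), μ, λ be finite measures on K. Suppose there exists a sequence of nonnegative reals ε_n → 0 such that for every measurable set B and every n, (√(μ(B)) − √(μ_n(B)))² ≤ ε_n and (√(λ(B)) − √(λ_n(B)))² ≤ ε_n. Suppose further that there exist measurable sets B_n ⊆ K with μ_n(K ∖ B_n) → 0 and λ_n(B_n) → 0 as n → ∞. Then μ and λ are mutually singular. -/

import Mathlib

open MeasureTheory Filter Topology

/-- Abstract content of Lemma 5.6: if `μ_n` approximates `μ` and `λ_n` approximates `λ`
uniformly over measurable sets in the square-root sense with error `ε_n → 0`, and there are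
measurable sets `B_n` with `μ_n(K ∖ B_n) → 0` and `λ_n(B_n) → 0`, then `μ ⟂ λ`. -/
theorem stmt16 {K : Type*} [MeasurableSpace K]
    (μs lams : ℕ → Measure K) (μ lam : Measure K)
    [∀ n, IsFiniteMeasure (μs n)] [∀ n, IsFiniteMeasure (lams n)]
    [IsFiniteMeasure μ] [IsFiniteMeasure lam]
    (ε : ℕ → ℝ) (hε0 : ∀ n, 0 ≤ ε n) (hεlim : Tendsto ε atTop (𝓝 0))
    (hμ : ∀ (n : ℕ) (B : Set K), MeasurableSet B →
      (Real.sqrt (μ B).toReal - Real.sqrt (μs n B).toReal) ^ 2 ≤ ε n)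
    (hlam : ∀ (n : ℕ) (B : Set K), MeasurableSet B →
      (Real.sqrt (lam B).toReal - Real.sqrt (lams n B).toReal) ^ 2 ≤ ε n)
    (Bs : ℕ → Set K) (hBmeas : ∀ n, MeasurableSet (Bs n))
    (h1 : Tendsto (fun n => (μs n (Bs n)ᶜ).toReal) atTop (𝓝 0))
    (h2 : Tendsto (fun n => (lams n (Bs n)).toReal) atTop (𝓝 0)) :
    Measure.MutuallySingular μ lam := by
  -- Step 1: from the sqrt estimates, μ (Bs n)ᶜ → 0 and lam (Bs n) → 0 (in toReal).
  have sqrt_est : ∀ (ν νn : Measure K) [IsFiniteMeasure ν] (n : ℕ) (B : Set K),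
      (Real.sqrt (ν B).toReal - Real.sqrt (νn B).toReal) ^ 2 ≤ ε n →
      (ν B).toReal ≤ (Real.sqrt (νn B).toReal + Real.sqrt (ε n)) ^ 2 := by
    intro ν νn _ n B hB
    have h0 : (0:ℝ) ≤ (ν B).toReal := ENNReal.toReal_nonneg
    have h0' : (0:ℝ) ≤ (νn B).toReal := ENNReal.toReal_nonneg
    have hle : Real.sqrt (ν B).toReal - Real.sqrt (νn B).toReal ≤ Real.sqrt (ε n) := by
      have habs : |Real.sqrt (ν B).toReal - Real.sqrt (νn B).toReal| ≤ Real.sqrt (ε n) := by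
        rw [← Real.sqrt_sq_eq_abs]
        exact Real.sqrt_le_sqrt hB
      linarith [le_abs_self (Real.sqrt (ν B).toReal - Real.sqrt (νn B).toReal)]
    have h1 : Real.sqrt (ν B).toReal ≤ Real.sqrt (νn B).toReal + Real.sqrt (ε n) := by linarith
    calc (ν B).toReal = (Real.sqrt (ν B).toReal) ^ 2 := (Real.sq_sqrt h0).symm
      _ ≤ (Real.sqrt (νn B).toReal + Real.sqrt (ε n)) ^ 2 := by
          apply pow_le_pow_left₀ (Real.sqrt_nonneg _) h1
  have hsqε : Tendsto (fun n => Real.sqrt (ε n)) atTop (𝓝 0) := by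
    simpa [Function.comp_def] using (Real.continuous_sqrt.continuousAt.tendsto.comp hεlim)
  have tendμ : Tendsto (fun n => (μ (Bs n)ᶜ).toReal) atTop (𝓝 0) := by
    have hub : Tendsto (fun n => (Real.sqrt (μs n (Bs n)ᶜ).toReal + Real.sqrt (ε n)) ^ 2)
        atTop (𝓝 0) := by
      have h' : Tendsto (fun n => Real.sqrt (μs n (Bs n)ᶜ).toReal + Real.sqrt (ε n))
          atTop (𝓝 0) := by
        have := ((Real.continuous_sqrt.continuousAt.tendsto.comp h1).add hsqε)
        simpa using this
      simpa using h'.pow 2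
    refine squeeze_zero (fun n => ENNReal.toReal_nonneg) (fun n => ?_) hub
    exact sqrt_est μ (μs n) n (Bs n)ᶜ (hμ n _ (hBmeas n).compl)
  have tendlam : Tendsto (fun n => (lam (Bs n)).toReal) atTop (𝓝 0) := by
    have hub : Tendsto (fun n => (Real.sqrt (lams n (Bs n)).toReal + Real.sqrt (ε n)) ^ 2)
        atTop (𝓝 0) := by
      have h' : Tendsto (fun n => Real.sqrt (lams n (Bs n)).toReal + Real.sqrt (ε n))
          atTop (𝓝 0) := by
        have := ((Real.continuous_sqrt.continuousAt.tendsto.comp h2).add hsqε)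
        simpa using this
      simpa using h'.pow 2
    refine squeeze_zero (fun n => ENNReal.toReal_nonneg) (fun n => ?_) hub
    exact sqrt_est lam (lams n) n (Bs n) (hlam n _ (hBmeas n))
  -- Step 2: extract a subsequence with geometric bounds.
  have hev : ∀ k : ℕ, ∀ᶠ n in atTop,
      (μ (Bs n)ᶜ).toReal ≤ (1/2:ℝ)^k ∧ (lam (Bs n)).toReal ≤ (1/2:ℝ)^k := by
    intro k
    have hpos : (0:ℝ) < (1/2:ℝ)^k := by positivity
    filter_upwards [tendμ.eventually (eventually_le_nhds hpos),
      tendlam.eventually (eventually_le_nhds hpos)] with n hn1 hn2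
    exact ⟨hn1, hn2⟩
  obtain ⟨φ, hφmono, hφ⟩ := extraction_forall_of_eventually hev
  -- geometric bounds as ENNReal bounds
  have hμbound : ∀ k, μ (Bs (φ k))ᶜ ≤ ENNReal.ofReal ((1/2:ℝ)^k) := fun k =>
    (ENNReal.le_ofReal_iff_toReal_le (measure_ne_top _ _) (by positivity)).2 (hφ k).1
  have hlbound : ∀ k, lam (Bs (φ k)) ≤ ENNReal.ofReal ((1/2:ℝ)^k) := fun k =>
    (ENNReal.le_ofReal_iff_toReal_le (measure_ne_top _ _) (by positivity)).2 (hφ k).2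
  -- Step 3: define the separating set.
  set S : Set K := ⋃ N, ⋂ k, ⋂ (_ : N ≤ k), Bs (φ k) with hS
  refine ⟨Sᶜ, (MeasurableSet.iUnion fun N => MeasurableSet.iInter fun k =>
    MeasurableSet.iInter fun _ => hBmeas (φ k)).compl, ?_, ?_⟩
  · -- μ Sᶜ = 0 by Borel–Cantelli
    have hsub : ∀ N, Sᶜ ⊆ ⋃ k, (Bs (φ (k + N)))ᶜ := by
      intro N x hx
      simp only [hS, Set.mem_compl_iff, Set.mem_iUnion, Set.mem_iInter, not_exists,
        not_forall] at hx
      obtain ⟨k, hk, hxk⟩ := hx N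
      exact Set.mem_iUnion.2 ⟨k - N, by simpa [Nat.sub_add_cancel hk] using hxk⟩
    have hbound : ∀ N, μ Sᶜ ≤ ∑' k, ENNReal.ofReal ((1/2:ℝ)^(k + N)) := by
      intro N
      calc μ Sᶜ ≤ μ (⋃ k, (Bs (φ (k + N)))ᶜ) := measure_mono (hsub N)
        _ ≤ ∑' k, μ (Bs (φ (k + N)))ᶜ := measure_iUnion_le _
        _ ≤ ∑' k, ENNReal.ofReal ((1/2:ℝ)^(k + N)) := ENNReal.tsum_le_tsum fun k => hμbound _
    have hsum : ∑' k, ENNReal.ofReal ((1/2:ℝ)^k) ≠ ⊤ := by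
      have heq : ∀ k : ℕ, ENNReal.ofReal ((1/2:ℝ)^k) = (2:ENNReal)⁻¹ ^ k := by
        intro k
        rw [ENNReal.ofReal_pow (by norm_num)]
        congr 1
        rw [show (1/2:ℝ) = (2:ℝ)⁻¹ by norm_num,
          ENNReal.ofReal_inv_of_pos (by norm_num)]
        norm_num
      rw [tsum_congr heq, ENNReal.tsum_geometric, ENNReal.one_sub_inv_two]
      simp
    have htail : Tendsto (fun N => ∑' k, ENNReal.ofReal ((1/2:ℝ)^(k + N))) atTop (𝓝 0) :=
      ENNReal.tendsto_sum_nat_add _ hsum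
    have := ge_of_tendsto htail (Eventually.of_forall hbound)
    exact le_antisymm this (zero_le)
  · -- lam S = 0
    have hzero : ∀ N, lam (⋂ k, ⋂ (_ : N ≤ k), Bs (φ k)) = 0 := by
      intro N
      have hle : ∀ m, N ≤ m → lam (⋂ k, ⋂ (_ : N ≤ k), Bs (φ k)) ≤
          ENNReal.ofReal ((1/2:ℝ)^m) := by
        intro m hm
        refine le_trans (measure_mono ?_) (hlbound m)
        exact Set.iInter_subset_of_subset m (Set.iInter_subset _ hm)
      have htend : Tendsto (fun m => ENNReal.ofReal ((1/2:ℝ)^m)) atTop (𝓝 0) := by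
        have : Tendsto (fun m : ℕ => (1/2:ℝ)^m) atTop (𝓝 0) :=
          tendsto_pow_atTop_nhds_zero_of_lt_one (by norm_num) (by norm_num)
        simpa using (ENNReal.tendsto_ofReal this)
      have := ge_of_tendsto htend (eventually_atTop.2 ⟨N, hle⟩)
      exact le_antisymm this (zero_le)
    rw [compl_compl]
    exact measure_iUnion_null fun N => hzero N
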